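/- arXiv:2004.05644 — 2 statements merged into one kernel-verified Lean document; each statement's English description precedes it below -/
import Mathlib

section
/- For positive integers m and N with N not dividing m, ∫_0^1 ({yN} − 1/2)·sin(πym)·cos(πym) dy = 0; and if N divides m, the integral equals −N/(4πm). -/
open Real MeasureTheory Finset Set

private lemma piece_antideriv (A C c : ℝ) (hc : c ≠ 0) (a b : ℝ) :
    ∫ y in a..b, (A * y - C) * Real.sin (c * y)
      = (-((A * b - C) * Real.cos (c * b)) / c + A * Real.sin (c * b) / c ^ 2)
        - (-((A * a - C) * Real.cos (c * a)) / c + A * Real.sin (c * a) / c ^ 2) := by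
  apply intervalIntegral.integral_eq_sub_of_hasDerivAt
  · intro y _
    have h1 : HasDerivAt (fun y : ℝ => A * y - C) A y := by
      simpa using ((hasDerivAt_id y).const_mul A).sub_const C
    have h2 : HasDerivAt (fun y : ℝ => Real.cos (c * y)) (-Real.sin (c * y) * c) y := by
      simpa [Function.comp_def] using (Real.hasDerivAt_cos (c * y)).comp y ((hasDerivAt_id y).const_mul c)
    have h3 : HasDerivAt (fun y : ℝ => Real.sin (c * y)) (Real.cos (c * y) * c) y := by
      simpa [Function.comp_def] using (Real.hasDerivAt_sin (c * y)).comp y ((hasDerivAt_id y).const_mul c)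
    have H := (((h1.mul h2).neg.div_const c).add ((h3.const_mul A).div_const (c ^ 2)))
    convert H using 1
    · funext x; simp only [Pi.add_apply, Pi.neg_apply, Pi.mul_apply]
    · field_simp; ring
  · exact (Continuous.intervalIntegrable (by continuity) a b)

private lemma cos_sum_eval (m N : ℕ) (hN : 0 < N) :
    ∑ j ∈ Finset.range N, Real.cos (2 * Real.pi * m * j / N)
      = if N ∣ m then (N : ℝ) else 0 := by
  have hNR : (N : ℝ) ≠ 0 := Nat.cast_ne_zero.mpr hN.ne'
  by_cases hd : N ∣ m
  · obtain ⟨k, hk⟩ := hd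
    rw [if_pos ⟨k, hk⟩]
    have : ∀ j ∈ Finset.range N, Real.cos (2 * Real.pi * m * j / N) = 1 := by
      intro j _
      rw [show (2 * Real.pi * m * j / N : ℝ) = ((k * j : ℕ) : ℝ) * (2 * Real.pi) by
        push_cast [hk]; field_simp]
      exact Real.cos_nat_mul_two_pi _
    rw [Finset.sum_congr rfl this]
    simp
  · rw [if_neg hd]
    set z : ℂ := Complex.exp ((2 * Real.pi * m / N : ℝ) * Complex.I) with hz
    have hz1 : z ≠ 1 := by
      intro h
      obtain ⟨n, hn⟩ := Complex.exp_eq_one_iff.mp h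
      have him : (2 * Real.pi * m / N : ℝ) = n * (2 * Real.pi) := by
        have := congrArg Complex.im hn
        simpa using this
      have hmn : (m : ℝ) = n * N := by
        field_simp at him
        nlinarith [Real.pi_pos, him]
      have : (N : ℤ) ∣ (m : ℤ) := ⟨n, by exact_mod_cast (by linarith [hmn] : (m : ℝ) = N * n)⟩
      exact hd (Int.natCast_dvd_natCast.mp this)
    have hzN : z ^ N = 1 := by
      rw [hz, ← Complex.exp_nat_mul]
      have hNC : (N : ℂ) ≠ 0 := Nat.cast_ne_zero.mpr hN.ne'
      rw [show ((N : ℂ) * ((2 * Real.pi * m / N : ℝ) * Complex.I)) = (m : ℤ) * (2 * Real.pi * Complex.I) by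
        push_cast; field_simp]
      exact Complex.exp_int_mul_two_pi_mul_I m
    have hsum : ∑ j ∈ Finset.range N, z ^ j = 0 := by
      rw [geom_sum_eq hz1, hzN]
      simp
    have hre : ∀ j ∈ Finset.range N, (z ^ j).re = Real.cos (2 * Real.pi * m * j / N) := by
      intro j _
      rw [hz, ← Complex.exp_nat_mul,
        show ((j : ℂ) * ((2 * Real.pi * m / N : ℝ) * Complex.I)) = ((2 * Real.pi * m * j / N : ℝ)) * Complex.I by
          push_cast; ring]
      exact Complex.exp_ofReal_mul_I_re _
    calc ∑ j ∈ Finset.range N, Real.cos (2 * Real.pi * m * j / N)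
        = ∑ j ∈ Finset.range N, (z ^ j).re := (Finset.sum_congr rfl hre).symm
      _ = (∑ j ∈ Finset.range N, z ^ j).re := by rw [Complex.re_sum]
      _ = 0 := by rw [hsum]; simp

theorem fract_sin_cos_integral (m N : ℕ) (hm : 0 < m) (hN : 0 < N) :
    ∫ y in (0:ℝ)..1,
        (Int.fract (y * N) - 1 / 2) * Real.sin (Real.pi * y * m) * Real.cos (Real.pi * y * m) =
      if N ∣ m then -(N : ℝ) / (4 * Real.pi * m) else 0 := by
  have hπ := Real.pi_pos
  have hNR : (0 : ℝ) < N := by exact_mod_cast hN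
  have hmR : (0 : ℝ) < m := by exact_mod_cast hm
  set c : ℝ := 2 * Real.pi * m with hcdef
  have hc : c ≠ 0 := by positivity
  set g : ℝ → ℝ := fun y => (Int.fract (y * N) - 1 / 2) * Real.sin (c * y) with hg
  -- Step 1: rewrite the integrand
  have h1 : (∫ y in (0:ℝ)..1,
        (Int.fract (y * N) - 1 / 2) * Real.sin (Real.pi * y * m) * Real.cos (Real.pi * y * m))
      = (∫ y in (0:ℝ)..1, g y) / 2 := by
    rw [← intervalIntegral.integral_div]
    apply intervalIntegral.integral_congr
    intro y _
    rw [hg]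
    simp only
    rw [show c * y = 2 * (Real.pi * y * m) by rw [hcdef]; ring, Real.sin_two_mul]
    ring
  rw [h1]
  -- the subdivision points
  set a : ℕ → ℝ := fun i => (i : ℝ) / N with ha
  -- per-piece facts
  have key : ∀ j, j < N →
      IntervalIntegrable g volume (a j) (a (j + 1)) ∧
      (∫ y in a j..a (j + 1), g y)
        = -(Real.cos (c * a (j + 1)) + Real.cos (c * a j)) / (2 * c)
          + (N / c ^ 2) * (Real.sin (c * a (j + 1)) - Real.sin (c * a j)) := by
    intro j hj
    set p : ℝ → ℝ := fun y => ((N : ℝ) * y - ((j : ℝ) + 1 / 2)) * Real.sin (c * y) with hp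
    have hab : a j < a (j + 1) := by
      rw [ha]
      apply div_lt_div_of_pos_right _ hNR
      push_cast; linarith
    have heqae : ∀ᵐ x ∂(volume : Measure ℝ), x ∈ Set.uIoc (a j) (a (j+1)) → g x = p x := by
      have hsub : {x : ℝ | ¬(x ∈ Set.uIoc (a j) (a (j+1)) → g x = p x)} ⊆ {a (j+1)} := by
        intro x hx
        simp only [Set.mem_setOf_eq, Classical.not_imp] at hx
        obtain ⟨hmem, hne⟩ := hx
        rw [Set.uIoc_of_le hab.le] at hmem
        by_contra hxb
        have hxb' : x < a (j + 1) := lt_of_le_of_ne hmem.2 (by simpa using hxb)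
        have hj1 : (j : ℝ) / N < x := by simpa [ha] using hmem.1
        have hj2 : x < ((j : ℝ) + 1) / N := by
          have := hxb'
          rw [ha] at this
          push_cast at this
          exact this
        have hl : (j : ℝ) < x * N := (div_lt_iff₀ hNR).mp hj1
        have hr : x * N < (j : ℝ) + 1 := (lt_div_iff₀ hNR).mp hj2
        have hfl : ⌊x * (N : ℝ)⌋ = (j : ℤ) := by
          rw [Int.floor_eq_iff]
          constructor
          · push_cast; linarith
          · push_cast; linarith
        have : g x = p x := by
          rw [hg, hp]
          simp only
          have hfr : Int.fract (x * (N : ℝ)) = x * N - j := by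
            rw [← Int.self_sub_floor, hfl]
            push_cast
            ring
          rw [hfr]
          ring
        exact hne this
      rw [MeasureTheory.ae_iff]
      exact measure_mono_null hsub (measure_singleton _)
    have hpint : IntervalIntegrable p volume (a j) (a (j + 1)) :=
      Continuous.intervalIntegrable (by fun_prop) _ _
    have hgint : IntervalIntegrable g volume (a j) (a (j + 1)) :=
      hpint.congr_ae ((MeasureTheory.ae_restrict_iff' measurableSet_uIoc).mpr
        (heqae.mono fun x h hx => (h hx).symm))
    constructor
    · exact hgint
    · rw [intervalIntegral.integral_congr_ae heqae]
      rw [hp]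
      rw [piece_antideriv (N : ℝ) ((j : ℝ) + 1/2) c hc]
      have hNa1 : (N : ℝ) * a (j + 1) - ((j : ℝ) + 1 / 2) = 1 / 2 := by
        rw [ha]; push_cast; field_simp; ring
      have hNa0 : (N : ℝ) * a j - ((j : ℝ) + 1 / 2) = -(1 / 2) := by
        rw [ha]; push_cast; field_simp; ring
      rw [hNa1, hNa0]
      field_simp
      ring
  -- sum the pieces
  have h2 : (∫ y in (0:ℝ)..1, g y) = ∑ j ∈ Finset.range N, ∫ y in a j..a (j + 1), g y := by
    have := intervalIntegral.sum_integral_adjacent_intervals (a := a) (n := N)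
      (fun k hk => (key k hk).1)
    rw [this]
    congr 1
    · rw [ha]; simp
    · rw [ha]; field_simp
  rw [h2, Finset.sum_congr rfl (fun j hj => (key j (Finset.mem_range.mp hj)).2)]
  -- evaluate the sum
  have hcos : ∀ j : ℕ, Real.cos (c * a j) = Real.cos (2 * Real.pi * m * j / N) := by
    intro j; rw [ha, hcdef]; ring_nf
  have hsin : ∀ j : ℕ, Real.sin (c * a j) = Real.sin (2 * Real.pi * m * j / N) := by
    intro j; rw [ha, hcdef]; ring_nf
  set S : ℝ := ∑ j ∈ Finset.range N, Real.cos (2 * Real.pi * m * j / N) with hS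
  have hcosN : Real.cos (2 * Real.pi * m * N / N) = 1 := by
    rw [show (2 * Real.pi * m * N / N : ℝ) = (m : ℕ) * (2 * Real.pi) by field_simp]
    exact Real.cos_nat_mul_two_pi m
  have hcos0 : Real.cos (2 * Real.pi * m * (0:ℕ) / N) = 1 := by norm_num
  have hsinN : Real.sin (2 * Real.pi * m * N / N) = 0 := by
    rw [show (2 * Real.pi * m * N / N : ℝ) = ((2 * m : ℕ) : ℝ) * Real.pi by push_cast; field_simp]
    exact Real.sin_nat_mul_pi _
  have hsin0 : Real.sin (2 * Real.pi * m * (0:ℕ) / N) = 0 := by norm_num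
  have hshift : ∑ j ∈ Finset.range N, Real.cos (2 * Real.pi * m * (j+1 : ℕ) / N) = S := by
    have h2 := Finset.sum_range_succ' (fun j : ℕ => Real.cos (2 * Real.pi * m * j / N)) N
    rw [Finset.sum_range_succ, hcosN] at h2
    push_cast at h2 ⊢
    norm_num at h2
    rw [hS]
    push_cast
    linarith
  have htel : ∑ j ∈ Finset.range N,
      (Real.sin (2 * Real.pi * m * (j+1 : ℕ) / N) - Real.sin (2 * Real.pi * m * j / N)) = 0 := by
    have := Finset.sum_range_sub (fun j : ℕ => Real.sin (2 * Real.pi * m * j / N)) N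
    push_cast at this ⊢
    rw [this, hsinN]
    simp
  have hsum_eval : ∑ j ∈ Finset.range N,
      (-(Real.cos (c * a (j + 1)) + Real.cos (c * a j)) / (2 * c)
        + (N / c ^ 2) * (Real.sin (c * a (j + 1)) - Real.sin (c * a j))) = -S / c := by
    have : ∀ j ∈ Finset.range N,
        (-(Real.cos (c * a (j + 1)) + Real.cos (c * a j)) / (2 * c)
          + (N / c ^ 2) * (Real.sin (c * a (j + 1)) - Real.sin (c * a j)))
        = -(Real.cos (2 * Real.pi * m * (j+1 : ℕ) / N) + Real.cos (2 * Real.pi * m * j / N)) / (2 * c)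
          + (N / c ^ 2) * (Real.sin (2 * Real.pi * m * (j+1 : ℕ) / N) - Real.sin (2 * Real.pi * m * j / N)) := by
      intro j _
      rw [hcos j, hcos (j+1), hsin j, hsin (j+1)]
    rw [Finset.sum_congr rfl this]
    rw [Finset.sum_add_distrib]
    have e1 : ∑ j ∈ Finset.range N,
        -(Real.cos (2 * Real.pi * m * (j+1 : ℕ) / N) + Real.cos (2 * Real.pi * m * j / N)) / (2 * c)
        = -(2 * S) / (2 * c) := by
      rw [← Finset.sum_div]
      congr 1
      rw [Finset.sum_neg_distrib, Finset.sum_add_distrib, hshift, ← hS]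
      ring
    have e2 : ∑ j ∈ Finset.range N,
        (N / c ^ 2) * (Real.sin (2 * Real.pi * m * (j+1 : ℕ) / N) - Real.sin (2 * Real.pi * m * j / N)) = 0 := by
      rw [← Finset.mul_sum, htel, mul_zero]
    rw [e1, e2]
    field_simp
    ring
  rw [hsum_eval, hS, cos_sum_eval m N hN]
  by_cases hd : N ∣ m
  · rw [if_pos hd, if_pos hd, hcdef]
    rw [div_div]
    ring_nf
  · rw [if_neg hd, if_neg hd]
    simp
end

section
/- Let f be completely multiplicative with f(m) = 1 for a fixed integer m > 1, l > 1 an integer, and χ(n) = −(m^l − 1) if m | n, χ(n) = 1 otherwise. Assume ∑_{n≥1} |f(n)|/n^l < ∞. Then for every positive integer N coprime to m, ∑_{k=1}^{N} ∑_{n≥1} (χ(n)f(n)/n^l)·cos(2πnk/N) = 0. -/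
open Finset Complex in
lemma sum_cos_Icc (N : ℕ) (hN : 0 < N) (n : ℕ) :
    ∑ k ∈ Finset.Icc 1 N, Real.cos (2 * Real.pi * n * k / N)
      = if N ∣ n then (N : ℝ) else 0 := by
  set g : ℕ → ℝ := fun k => Real.cos (2 * Real.pi * n * k / N) with hg
  have hgN : g N = g 0 := by
    simp only [hg, Nat.cast_zero, mul_zero, zero_div, Real.cos_zero]
    have h : 2 * Real.pi * n * N / N = 2 * Real.pi * n := by field_simp
    rw [h]
    have := Real.cos_nat_mul_two_pi n
    rw [show (n : ℝ) * (2 * Real.pi) = 2 * Real.pi * n by ring] at this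
    exact this
  have hIcc : ∑ k ∈ Finset.Icc 1 N, g k = ∑ k ∈ Finset.range N, g k := by
    rw [show Finset.Icc 1 N = Finset.Ico 1 (N + 1) by rfl,
      Finset.sum_Ico_eq_sum_range]
    simp only [Nat.add_sub_cancel]
    have h1 : ∑ k ∈ Finset.range N, g (1 + k) = ∑ k ∈ Finset.range N, g (k + 1) := by
      simp [Nat.add_comm]
    have h2 := Finset.sum_range_succ' g N
    have h3 := Finset.sum_range_succ g N
    rw [h1]; linarith
  rw [hIcc]
  set z : ℂ := Complex.exp ((2 * Real.pi * n / N : ℝ) * Complex.I) with hz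
  have hzk : ∀ k : ℕ, g k = (z ^ k).re := by
    intro k
    rw [hz, ← Complex.exp_nat_mul]
    have h : (k : ℂ) * (((2 * Real.pi * n / N : ℝ)) * Complex.I)
        = ((2 * Real.pi * n * k / N : ℝ)) * Complex.I := by
      push_cast; ring
    rw [h, Complex.exp_ofReal_mul_I_re]
  have hsum : ∑ k ∈ Finset.range N, g k = (∑ k ∈ Finset.range N, z ^ k).re := by
    rw [Complex.re_sum]
    exact Finset.sum_congr rfl fun k _ => hzk k
  rw [hsum]
  have hN' : (N : ℝ) ≠ 0 := Nat.cast_ne_zero.mpr hN.ne'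
  have hNc : (N : ℂ) ≠ 0 := Nat.cast_ne_zero.mpr hN.ne'
  by_cases hdvd : N ∣ n
  · obtain ⟨c, rfl⟩ := hdvd
    have hz1 : z = 1 := by
      rw [hz]
      have harg : (2 * Real.pi * ((N * c : ℕ) : ℝ) / N) = (c : ℝ) * (2 * Real.pi) := by
        push_cast; field_simp
      rw [harg]
      have h2 : ((((c : ℝ) * (2 * Real.pi)) : ℝ) : ℂ) * Complex.I
          = (c : ℂ) * (2 * Real.pi * Complex.I) := by push_cast; ring
      rw [h2]
      exact Complex.exp_nat_mul_two_pi_mul_I c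
    simp only [hz1, one_pow, Finset.sum_const, Finset.card_range, nsmul_eq_mul, mul_one]
    rw [if_pos ⟨c, rfl⟩]
    simp
  · have hzN : z ^ N = 1 := by
      rw [hz, ← Complex.exp_nat_mul]
      have h : (N : ℂ) * (((2 * Real.pi * n / N : ℝ)) * Complex.I)
          = (n : ℤ) * (2 * Real.pi * Complex.I) := by
        push_cast
        field_simp
      rw [h]
      exact Complex.exp_int_mul_two_pi_mul_I n
    have hz1 : z ≠ 1 := by
      intro h
      rw [hz, Complex.exp_eq_one_iff] at h
      obtain ⟨t, ht⟩ := h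
      apply hdvd
      have hI : ((2 * Real.pi * n / N : ℝ) : ℂ) = (t : ℂ) * (2 * Real.pi) := by
        rw [show (t : ℂ) * (2 * Real.pi * Complex.I) = ((t : ℂ) * (2 * Real.pi)) * Complex.I
          by ring] at ht
        exact mul_right_cancel₀ Complex.I_ne_zero ht
      have hR : (2 * Real.pi * n / N : ℝ) = (t : ℝ) * (2 * Real.pi) := by
        have := congrArg Complex.re hI
        simpa using this
      have hpi : (2 * Real.pi) ≠ 0 := by positivity
      have hR2 : 2 * Real.pi * (n : ℝ) = (t : ℝ) * (2 * Real.pi) * N := by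
        field_simp at hR; linear_combination (2 * Real.pi) * hR
      have hn : (n : ℝ) = (t : ℝ) * N :=
        mul_left_cancel₀ hpi (by linear_combination hR2)
      have hnz : (n : ℤ) = t * N := by exact_mod_cast hn
      have : (N : ℤ) ∣ (n : ℤ) := ⟨t, by linarith⟩
      exact_mod_cast this
    rw [geom_sum_eq hz1, hzN]
    simp [hdvd]

theorem fine_query_chi (m l : ℕ) (hm : 1 < m) (hl : 1 < l)
    (χ : ℕ → ℝ) (hχ : ∀ n, χ n = if m ∣ n then -((m : ℝ) ^ l - 1) else 1)
    (f : ℕ → ℝ) (hf1 : f 1 = 1) (hmul : ∀ a b : ℕ, f (a * b) = f a * f b)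
    (hfm : f m = 1)
    (hsum : Summable fun n : ℕ => |f (n + 1)| / (n + 1 : ℝ) ^ l)
    (N : ℕ) (hN : 0 < N) (hcop : Nat.Coprime N m) :
    ∑ k ∈ Finset.Icc 1 N,
        ∑' n : ℕ,
          (χ (n + 1) * f (n + 1) / (n + 1 : ℝ) ^ l) *
            Real.cos (2 * Real.pi * (n + 1) * k / N) = 0 := by
  have hl0 : l ≠ 0 := by omega
  have hmR1 : (1 : ℝ) ≤ (m : ℝ) ^ l := one_le_pow₀ (by exact_mod_cast hm.le)
  have hmRl : ((m : ℝ) ^ l) ≠ 0 := by positivity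
  set C : ℕ → ℝ := fun n => ∑ k ∈ Finset.Icc 1 N, Real.cos (2 * Real.pi * n * k / N)
    with hCdef
  have hC : ∀ n, C n = if N ∣ n then (N : ℝ) else 0 := fun n => sum_cos_Icc N hN n
  have hCm : ∀ n, C (m * n) = C n := by
    intro n
    rw [hC, hC]
    have hiff : (N ∣ m * n) ↔ (N ∣ n) :=
      ⟨fun h => hcop.dvd_of_dvd_mul_left h, fun h => h.mul_left m⟩
    rw [if_congr hiff rfl rfl]
  have hCb : ∀ n, |C n| ≤ (N : ℝ) := by
    intro n
    rw [hC]
    split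
    · simp
    · simp
  have hχb : ∀ n, |χ n| ≤ (m : ℝ) ^ l := by
    intro n
    rw [hχ]
    split
    · rw [abs_neg, abs_of_nonneg (by linarith)]; linarith
    · rw [abs_one]; linarith
  set a : ℕ → ℝ := fun n => f n / (n : ℝ) ^ l * C n with hadef
  set b : ℕ → ℝ := fun n => χ n * f n / (n : ℝ) ^ l * C n with hbdef
  set d : ℕ → ℝ := fun n => if m ∣ n then (m : ℝ) ^ l * a n else 0 with hddef
  -- summability of |f n| / n^l
  have hF : Summable fun n : ℕ => |f n| / (n : ℝ) ^ l := by
    apply (summable_nat_add_iff 1).mp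
    exact hsum.congr fun n => by push_cast; ring
  have habs_bound : ∀ (c : ℝ) (g : ℕ → ℝ), (∀ n, |g n| ≤ c * (|f n| / (n : ℝ) ^ l)) →
      Summable g := by
    intro c g hg
    refine Summable.of_abs (Summable.of_nonneg_of_le (fun n => abs_nonneg _) hg ?_)
    exact hF.mul_left c
  have hsa : Summable a := by
    apply habs_bound (N : ℝ)
    intro n
    rw [hadef]
    have hpow : (0:ℝ) ≤ (n : ℝ) ^ l := by positivity
    rw [abs_mul, abs_div, abs_of_nonneg hpow]
    calc |f n| / (n : ℝ) ^ l * |C n| ≤ |f n| / (n : ℝ) ^ l * (N : ℝ) := by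
          gcongr <;> first | positivity | exact hCb n
      _ = (N : ℝ) * (|f n| / (n : ℝ) ^ l) := by ring
  have hsb : Summable b := by
    apply habs_bound ((m : ℝ) ^ l * N)
    intro n
    rw [hbdef]
    have hpow : (0:ℝ) ≤ (n : ℝ) ^ l := by positivity
    rw [abs_mul, abs_div, abs_mul, abs_of_nonneg hpow]
    calc |χ n| * |f n| / (n : ℝ) ^ l * |C n|
        ≤ (m : ℝ) ^ l * |f n| / (n : ℝ) ^ l * (N : ℝ) := by
          gcongr <;> first | positivity | exact hχb n | exact hCb n
      _ = (m : ℝ) ^ l * N * (|f n| / (n : ℝ) ^ l) := by ring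
  have hsd : Summable d := by
    apply habs_bound ((m : ℝ) ^ l * N)
    intro n
    have hpow : (0:ℝ) ≤ (n : ℝ) ^ l := by positivity
    by_cases h : m ∣ n
    · have hdn : d n = (m : ℝ) ^ l * a n := if_pos h
      rw [hdn]
      have han : a n = f n / (n : ℝ) ^ l * C n := rfl
      rw [han, abs_mul, abs_mul, abs_div, abs_of_nonneg hpow,
        abs_of_nonneg (by positivity : (0:ℝ) ≤ (m:ℝ)^l)]
      calc (m : ℝ) ^ l * (|f n| / (n : ℝ) ^ l * |C n|)
          ≤ (m : ℝ) ^ l * (|f n| / (n : ℝ) ^ l * (N : ℝ)) := by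
            gcongr <;> first | positivity | exact hCb n
        _ = (m : ℝ) ^ l * N * (|f n| / (n : ℝ) ^ l) := by ring
    · have hdn : d n = 0 := if_neg h
      rw [hdn, abs_zero]
      positivity
  have ha0 : a 0 = 0 := by
    simp [hadef, zero_pow hl0]
  have hb0 : b 0 = 0 := by
    simp [hbdef, zero_pow hl0]
  -- step 1 : swap the sums
  have hk : ∀ k ∈ Finset.Icc 1 N, Summable (fun n : ℕ =>
      (χ (n + 1) * f (n + 1) / (n + 1 : ℝ) ^ l) * Real.cos (2 * Real.pi * (n + 1) * k / N)) := by
    intro k _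
    refine Summable.of_abs (Summable.of_nonneg_of_le (fun n => abs_nonneg _) ?_
      (hsum.mul_left ((m : ℝ) ^ l)))
    intro n
    have hpow : (0:ℝ) ≤ ((n : ℝ) + 1) ^ l := by positivity
    rw [abs_mul, abs_div, abs_mul, abs_of_nonneg hpow]
    calc |χ (n+1)| * |f (n+1)| / ((n : ℝ) + 1) ^ l * |Real.cos (2 * Real.pi * (n + 1) * k / N)|
        ≤ (m : ℝ) ^ l * |f (n+1)| / ((n : ℝ) + 1) ^ l * 1 := by
          gcongr <;> first | positivity | exact hχb (n+1) | exact Real.abs_cos_le_one _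
      _ = (m : ℝ) ^ l * (|f (n+1)| / ((n : ℝ) + 1) ^ l) := by ring
  rw [← Summable.tsum_finsetSum hk]
  have step1 : ∀ n : ℕ, (∑ k ∈ Finset.Icc 1 N,
      (χ (n + 1) * f (n + 1) / (n + 1 : ℝ) ^ l) * Real.cos (2 * Real.pi * (n + 1) * k / N))
      = b (n + 1) := by
    intro n
    rw [← Finset.mul_sum, hbdef, hCdef]
    push_cast
    ring
  rw [tsum_congr step1]
  -- shift
  have hshift : ∑' n : ℕ, b (n + 1) = ∑' n : ℕ, b n := by
    rw [Summable.tsum_eq_zero_add hsb, hb0, zero_add]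
  rw [hshift]
  -- split b = a - d
  have hbad : ∀ n, b n = a n - d n := by
    intro n
    by_cases h : m ∣ n
    · have h1 : b n = χ n * f n / (n : ℝ) ^ l * C n := rfl
      have h2 : a n = f n / (n : ℝ) ^ l * C n := rfl
      have h3 : d n = (m : ℝ) ^ l * a n := if_pos h
      rw [h1, h3, h2, hχ, if_pos h]; ring
    · have h1 : b n = χ n * f n / (n : ℝ) ^ l * C n := rfl
      have h2 : a n = f n / (n : ℝ) ^ l * C n := rfl
      have h3 : d n = 0 := if_neg h
      rw [h1, h3, h2, hχ, if_neg h]; ring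
  rw [tsum_congr hbad, Summable.tsum_sub hsa hsd]
  -- ∑' d = ∑' a
  have hinj : Function.Injective (fun j : ℕ => m * j) := fun x y h => by
    have : m * x = m * y := h
    exact Nat.eq_of_mul_eq_mul_left (by omega) this
  have hsupp : Function.support d ⊆ Set.range (fun j : ℕ => m * j) := by
    intro n hn
    rw [Function.mem_support] at hn
    by_cases h : m ∣ n
    · obtain ⟨c, rfl⟩ := h
      exact Set.mem_range.mpr ⟨c, rfl⟩
    · exact absurd (by rw [hddef]; exact if_neg h) hn
  have hd : ∑' n, d n = ∑' n, a n := by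
    rw [← hinj.tsum_eq hsupp]
    refine tsum_congr fun j => ?_
    show d (m * j) = a j
    have h1 : d (m * j) = (m : ℝ) ^ l * a (m * j) := if_pos ⟨j, rfl⟩
    rw [h1]
    by_cases hj : j = 0
    · subst hj
      rw [mul_zero, ha0, mul_zero]
    · have hjR : ((j : ℝ)) ^ l ≠ 0 := by
        have : (0:ℝ) < (j:ℝ) := by exact_mod_cast Nat.pos_of_ne_zero hj
        positivity
      have h2 : a (m * j) = f (m * j) / ((m * j : ℕ) : ℝ) ^ l * C (m * j) := rfl
      have h3 : a j = f j / (j : ℝ) ^ l * C j := rfl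
      rw [h2, h3, hCm j, hmul m j, hfm, one_mul]
      push_cast
      rw [mul_pow]
      field_simp
  rw [hd, sub_self]
end
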